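/- Let λ > 0, ε > 0, β > 0, l ∈ ℤ, and let g be as in Lemma 3.1 with the stated hypotheses on φ. Set ε₁ = min{ε/(6β(β+1)2^(β+2)), ε/(4β(β+1)(β+2)2^(β+3)), ε/8} and ε₂ = ε/8. If |g_r(r₀,θ₀)| ≥ ελ at some point (r₀,θ₀) ∈ [1/2,2]×[0,π], and (r,θ) satisfies |r−r₀| < ε₁, |θ−θ₀| < ε₂ (with (r,θ) in the domain), then |g_r(r,θ)| ≥ ελ/2. -/

import Mathlib

set_option maxHeartbeats 1000000 in
theorem stmt_9 (n : ℕ) (β k₁ k₂ k₃ ε : ℝ) (l : ℤ)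
    (ξ' : EuclideanSpace ℝ (Fin n)) (ξlast : ℝ)
    (φ φ' φ'' φ''' : ℝ → ℝ)
    (hβ : 0 < β)
    (hd1 : ∀ x > (0:ℝ), HasDerivAt φ (φ' x) x)
    (hd2 : ∀ x > (0:ℝ), HasDerivAt φ' (φ'' x) x)
    (hd3 : ∀ x > (0:ℝ), HasDerivAt φ'' (φ''' x) x)
    (hcont : ContinuousOn φ''' (Set.Ioi 0))
    (hsign : ∀ x > (0:ℝ), φ' x * φ'' x > 0)
    (hk₁ : 0 < k₁) (hk₁₂ : k₁ ≤ k₂)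
    (hbd : ∀ x > (0:ℝ), k₁ ≤ x * φ'' x / φ' x ∧ x * φ'' x / φ' x ≤ k₂)
    (hk₃ : 0 < k₃)
    (hbd3 : ∀ x > (0:ℝ), |x * φ''' x / φ'' x| ≤ k₃)
    (hε0 : 0 < ε)
    (hε : ε < min (min (1 / (2 * Real.sqrt 2)) (1 / (4 * k₂ * (3 * β + 7))))
      (min (β / ((4 + 3 * k₂) * (2:ℝ) ^ β)) (1 / (8 * k₂ * k₃ * (3 * β + 7)))))
    (lam : ℝ)
    (hlam : lam = max (max ((2:ℝ) ^ (β * (l:ℝ))) ((2:ℝ) ^ (-l) * ‖ξ'‖))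
      (max (|ξlast| * (2:ℝ) ^ (-2 * l) *
              sSup ((fun r : ℝ => |φ'' r|) '' Set.Icc ((2:ℝ) ^ (-l - 1)) ((2:ℝ) ^ (-l + 1))))
           (|ξlast| * (2:ℝ) ^ (-3 * l) *
              sSup ((fun r : ℝ => |φ''' r|) '' Set.Icc ((2:ℝ) ^ (-l - 1)) ((2:ℝ) ^ (-l + 1))))))
    (g : ℝ → ℝ → ℝ)
    (hg : ∀ r θ : ℝ, g r θ = (2:ℝ) ^ (-l) * ‖ξ'‖ * r * Real.cos θ +
      ξlast * φ ((2:ℝ) ^ (-l) * r) + (2:ℝ) ^ (β * (l:ℝ)) * r ^ (-β))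
    (ε₁ ε₂ : ℝ)
    (hε₁ : ε₁ = min (min (ε / (6 * β * (β + 1) * (2:ℝ) ^ (β + 2)))
      (ε / (4 * β * (β + 1) * (β + 2) * (2:ℝ) ^ (β + 3)))) (ε / 8))
    (hε₂ : ε₂ = ε / 8)
    (r₀ θ₀ r θ : ℝ)
    (hr₀ : r₀ ∈ Set.Icc (1/2 : ℝ) 2) (hθ₀ : θ₀ ∈ Set.Icc (0:ℝ) Real.pi)
    (hr : r ∈ Set.Icc (1/2 : ℝ) 2) (hθ : θ ∈ Set.Icc (0:ℝ) Real.pi)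
    (hclose_r : |r - r₀| < ε₁) (hclose_θ : |θ - θ₀| < ε₂)
    (h₀ : ε * lam ≤ |deriv (fun r' => g r' θ₀) r₀|) :
    ε * lam / 2 ≤ |deriv (fun r' => g r' θ) r| := by
  set c : ℝ := (2:ℝ) ^ (-l) with hc_def
  set b : ℝ := (2:ℝ) ^ (β * (l:ℝ)) with hb_def
  set a : ℝ := c * ‖ξ'‖ with ha_def
  set M : ℝ := sSup ((fun r : ℝ => |φ'' r|) '' Set.Icc ((2:ℝ) ^ (-l - 1)) ((2:ℝ) ^ (-l + 1))) with hM_def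
  have hc : 0 < c := zpow_pos (by norm_num) _
  have hb : 0 < b := Real.rpow_pos_of_pos (by norm_num) _
  have ha : 0 ≤ a := mul_nonneg hc.le (norm_nonneg _)
  -- endpoints of the Icc for φ''
  have hL : (2:ℝ) ^ (-l - 1) = c * (1/2) := by
    rw [hc_def, sub_eq_add_neg, zpow_add₀ (two_ne_zero : (2:ℝ) ≠ 0)]
    norm_num
  have hU : (2:ℝ) ^ (-l + 1) = c * 2 := by
    rw [hc_def, zpow_add₀ (two_ne_zero : (2:ℝ) ≠ 0)]
    norm_num
  have hLpos : (0:ℝ) < (2:ℝ) ^ (-l - 1) := zpow_pos (by norm_num) _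
  have hmem : ∀ s ∈ Set.Icc (1/2 : ℝ) 2,
      c * s ∈ Set.Icc ((2:ℝ) ^ (-l - 1)) ((2:ℝ) ^ (-l + 1)) := by
    intro s hs
    constructor
    · rw [hL]; exact mul_le_mul_of_nonneg_left hs.1 hc.le
    · rw [hU]; exact mul_le_mul_of_nonneg_left hs.2 hc.le
  -- derivative formula
  have hD : ∀ s ∈ Set.Icc (1/2 : ℝ) 2, ∀ θ' : ℝ,
      HasDerivAt (fun r' => g r' θ')
        (a * Real.cos θ' + ξlast * (φ' (c * s) * c) + b * (-β * s ^ (-β - 1))) s := by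
    intro s hs θ'
    have hs0 : (0:ℝ) < s := lt_of_lt_of_le (by norm_num) hs.1
    have hfun : (fun r' => g r' θ') =
        fun r' => a * r' * Real.cos θ' + ξlast * φ (c * r') + b * r' ^ (-β) :=
      funext fun r' => hg r' θ'
    rw [hfun]
    have h1 : HasDerivAt (fun r' : ℝ => a * r' * Real.cos θ') (a * Real.cos θ') s := by
      simpa using ((hasDerivAt_id s).const_mul a).mul_const (Real.cos θ')
    have hin : HasDerivAt (fun x : ℝ => c * x) c s := by
      simpa using (hasDerivAt_id s).const_mul c
    have h2 : HasDerivAt (fun r' : ℝ => φ (c * r')) (φ' (c * s) * c) s := by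
      exact (hd1 (c * s) (by positivity)).comp s hin
    have h3 : HasDerivAt (fun x : ℝ => x ^ (-β)) (-β * s ^ (-β - 1)) s := by
      simpa using Real.hasDerivAt_rpow_const (p := -β) (Or.inl hs0.ne')
    exact (h1.add (h2.const_mul ξlast)).add (h3.const_mul b)
  have hdr : deriv (fun r' => g r' θ) r =
      a * Real.cos θ + ξlast * (φ' (c * r) * c) + b * (-β * r ^ (-β - 1)) :=
    (hD r hr θ).deriv
  have hdr₀ : deriv (fun r' => g r' θ₀) r₀ =
      a * Real.cos θ₀ + ξlast * (φ' (c * r₀) * c) + b * (-β * r₀ ^ (-β - 1)) :=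
    (hD r₀ hr₀ θ₀).deriv
  -- lambda bounds
  have hlam_b : b ≤ lam := by rw [hlam]; exact le_trans (le_max_left _ _) (le_max_left _ _)
  have hlam_a : a ≤ lam := by rw [hlam]; exact le_trans (le_max_right _ _) (le_max_left _ _)
  have hlam_M : |ξlast| * (2:ℝ) ^ (-2 * l) * M ≤ lam := by
    rw [hlam]; exact le_trans (le_max_left _ _) (le_max_right _ _)
  have hlam0 : 0 < lam := lt_of_lt_of_le hb hlam_b
  -- cos is 1-Lipschitz
  have hcos : |Real.cos θ - Real.cos θ₀| ≤ |θ - θ₀| := by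
    have := (convex_univ : Convex ℝ (Set.univ : Set ℝ)).norm_image_sub_le_of_norm_hasDerivWithin_le
      (f := Real.cos) (f' := fun t => -Real.sin t) (C := 1)
      (fun t _ => (Real.hasDerivAt_cos t).hasDerivWithinAt)
      (fun t _ => by rw [Real.norm_eq_abs, abs_neg]; exact Real.abs_sin_le_one t)
      (Set.mem_univ θ₀) (Set.mem_univ θ)
    simpa using this
  -- bound on M and φ' Lipschitz
  have hcont'' : ContinuousOn (fun x => |φ'' x|)
      (Set.Icc ((2:ℝ) ^ (-l - 1)) ((2:ℝ) ^ (-l + 1))) := by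
    intro x hx
    exact ((hd3 x (lt_of_lt_of_le hLpos hx.1)).continuousAt.continuousWithinAt).abs
  have hbdd : BddAbove ((fun x => |φ'' x|) '' Set.Icc ((2:ℝ) ^ (-l - 1)) ((2:ℝ) ^ (-l + 1))) :=
    (isCompact_Icc.image_of_continuousOn hcont'').bddAbove
  have hMle : ∀ x ∈ Set.Icc ((2:ℝ) ^ (-l - 1)) ((2:ℝ) ^ (-l + 1)), |φ'' x| ≤ M :=
    fun x hx => le_csSup hbdd ⟨x, hx, rfl⟩
  have hM0 : 0 ≤ M := le_trans (abs_nonneg _) (hMle (c * r) (hmem r hr))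
  have hφ'lip : |φ' (c * r) - φ' (c * r₀)| ≤ M * |c * r - c * r₀| := by
    have := (convex_Icc ((2:ℝ) ^ (-l - 1)) ((2:ℝ) ^ (-l + 1))).norm_image_sub_le_of_norm_hasDerivWithin_le
      (f := φ') (f' := φ'') (C := M)
      (fun x hx => (hd2 x (lt_of_lt_of_le hLpos hx.1)).hasDerivWithinAt)
      (fun x hx => by rw [Real.norm_eq_abs]; exact hMle x hx)
      (hmem r₀ hr₀) (hmem r hr)
    simpa using this
  -- rpow Lipschitz on [1/2, 2]
  have hrpow : |r ^ (-β - 1) - r₀ ^ (-β - 1)| ≤ ((β + 1) * (2:ℝ) ^ (β + 2)) * |r - r₀| := by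
    have key : ∀ x ∈ Set.Icc (1/2 : ℝ) 2,
        ‖(-β - 1) * x ^ (-β - 1 - 1)‖ ≤ (β + 1) * (2:ℝ) ^ (β + 2) := by
      intro x hx
      have hx0 : (0:ℝ) < x := lt_of_lt_of_le (by norm_num) hx.1
      have h1 : x ^ (-β - 1 - 1) = (x ^ (β + 2))⁻¹ := by
        rw [show -β - 1 - 1 = -(β + 2) by ring, Real.rpow_neg hx0.le]
      have h2 : ((1:ℝ)/2) ^ (β + 2) ≤ x ^ (β + 2) :=
        Real.rpow_le_rpow (by norm_num) hx.1 (by linarith)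
      have h3 : ((1:ℝ)/2) ^ (β + 2) = ((2:ℝ) ^ (β + 2))⁻¹ := by
        rw [show (1:ℝ)/2 = (2:ℝ)⁻¹ by norm_num, Real.inv_rpow (by norm_num : (0:ℝ) ≤ 2)]
      have h4 : (x ^ (β + 2))⁻¹ ≤ (2:ℝ) ^ (β + 2) := by
        rw [← inv_inv ((2:ℝ) ^ (β + 2)), ← h3]
        exact inv_anti₀ (by positivity) h2
      have h5 : ‖(-β - 1) * x ^ (-β - 1 - 1)‖ = (β + 1) * (x ^ (β + 2))⁻¹ := by
        rw [Real.norm_eq_abs, abs_mul, h1, abs_of_nonpos (by linarith : -β - 1 ≤ 0),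
          abs_of_nonneg (by positivity : (0:ℝ) ≤ (x ^ (β + 2))⁻¹)]
        ring
      rw [h5]
      exact mul_le_mul_of_nonneg_left h4 (by linarith)
    have := (convex_Icc (1/2 : ℝ) 2).norm_image_sub_le_of_norm_hasDerivWithin_le
      (f := fun x => x ^ (-β - 1)) (f' := fun x => (-β - 1) * x ^ (-β - 1 - 1))
      (C := (β + 1) * (2:ℝ) ^ (β + 2))
      (fun x hx => (Real.hasDerivAt_rpow_const (p := -β - 1)
        (Or.inl (ne_of_gt (lt_of_lt_of_le (by norm_num) hx.1)))).hasDerivWithinAt)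
      key hr₀ hr
    simpa using this
  -- closeness consequences
  have hr8 : |r - r₀| ≤ ε / 8 := hclose_r.le.trans (by rw [hε₁]; exact min_le_right _ _)
  have hr6 : |r - r₀| ≤ ε / (6 * β * (β + 1) * (2:ℝ) ^ (β + 2)) :=
    hclose_r.le.trans (by rw [hε₁]; exact le_trans (min_le_left _ _) (min_le_left _ _))
  have hθ8 : |θ - θ₀| ≤ ε / 8 := hclose_θ.le.trans (le_of_eq hε₂)
  have hc2 : c * c = (2:ℝ) ^ (-2 * l) := by
    rw [hc_def, ← zpow_add₀ (two_ne_zero : (2:ℝ) ≠ 0)]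
    congr 1; ring
  -- term bounds
  have T1 : |a * Real.cos θ - a * Real.cos θ₀| ≤ lam * (ε / 8) := by
    have : a * Real.cos θ - a * Real.cos θ₀ = a * (Real.cos θ - Real.cos θ₀) := by ring
    rw [this, abs_mul, abs_of_nonneg ha]
    exact mul_le_mul hlam_a (hcos.trans hθ8) (abs_nonneg _) hlam0.le
  have hcr : |c * r - c * r₀| = c * |r - r₀| := by
    rw [← mul_sub, abs_mul, abs_of_nonneg hc.le]
  have T2 : |ξlast * (φ' (c * r) * c) - ξlast * (φ' (c * r₀) * c)| ≤ lam * (ε / 8) := by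
    have e2 : ξlast * (φ' (c * r) * c) - ξlast * (φ' (c * r₀) * c)
        = (ξlast * c) * (φ' (c * r) - φ' (c * r₀)) := by ring
    have step : |ξlast| * c * |φ' (c * r) - φ' (c * r₀)|
        ≤ (|ξlast| * (2:ℝ) ^ (-2 * l) * M) * |r - r₀| := by
      calc |ξlast| * c * |φ' (c * r) - φ' (c * r₀)|
          ≤ |ξlast| * c * (M * (c * |r - r₀|)) := by
            refine mul_le_mul_of_nonneg_left ?_ (by positivity)
            calc |φ' (c * r) - φ' (c * r₀)| ≤ M * |c * r - c * r₀| := hφ'lip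
              _ = M * (c * |r - r₀|) := by rw [hcr]
        _ = (|ξlast| * (c * c) * M) * |r - r₀| := by ring
        _ = (|ξlast| * (2:ℝ) ^ (-2 * l) * M) * |r - r₀| := by rw [hc2]
    rw [e2, abs_mul, abs_mul, abs_of_nonneg hc.le]
    calc |ξlast| * c * |φ' (c * r) - φ' (c * r₀)|
        ≤ (|ξlast| * (2:ℝ) ^ (-2 * l) * M) * |r - r₀| := step
      _ ≤ lam * (ε / 8) := mul_le_mul hlam_M hr8 (abs_nonneg _) hlam0.le
  have T3 : |b * (-β * r ^ (-β - 1)) - b * (-β * r₀ ^ (-β - 1))| ≤ lam * (ε / 6) := by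
    have e3 : b * (-β * r ^ (-β - 1)) - b * (-β * r₀ ^ (-β - 1))
        = (-(b * β)) * (r ^ (-β - 1) - r₀ ^ (-β - 1)) := by ring
    have k : β * ((β + 1) * (2:ℝ) ^ (β + 2)) * |r - r₀| ≤ ε / 6 := by
      have h2pos : (0:ℝ) < (2:ℝ) ^ (β + 2) := by positivity
      calc β * ((β + 1) * (2:ℝ) ^ (β + 2)) * |r - r₀|
          ≤ β * ((β + 1) * (2:ℝ) ^ (β + 2)) * (ε / (6 * β * (β + 1) * (2:ℝ) ^ (β + 2))) :=
            mul_le_mul_of_nonneg_left hr6 (by positivity)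
        _ = ε / 6 := by
            field_simp
    rw [e3, abs_mul, abs_neg, abs_of_nonneg (by positivity : (0:ℝ) ≤ b * β)]
    calc b * β * |r ^ (-β - 1) - r₀ ^ (-β - 1)|
        ≤ b * β * ((β + 1) * (2:ℝ) ^ (β + 2) * |r - r₀|) :=
          mul_le_mul_of_nonneg_left hrpow (by positivity)
      _ = b * (β * ((β + 1) * (2:ℝ) ^ (β + 2)) * |r - r₀|) := by ring
      _ ≤ lam * (ε / 6) := mul_le_mul hlam_b k (by positivity) hlam0.le
  -- combine
  have hdiff : |deriv (fun r' => g r' θ) r - deriv (fun r' => g r' θ₀) r₀|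
      ≤ lam * (ε / 8) + lam * (ε / 8) + lam * (ε / 6) := by
    rw [hdr, hdr₀]
    have e : (a * Real.cos θ + ξlast * (φ' (c * r) * c) + b * (-β * r ^ (-β - 1)))
        - (a * Real.cos θ₀ + ξlast * (φ' (c * r₀) * c) + b * (-β * r₀ ^ (-β - 1)))
        = (a * Real.cos θ - a * Real.cos θ₀)
          + (ξlast * (φ' (c * r) * c) - ξlast * (φ' (c * r₀) * c))
          + (b * (-β * r ^ (-β - 1)) - b * (-β * r₀ ^ (-β - 1))) := by ring
    rw [e]
    calc |_ + _ + _| ≤ |_ + _| + |b * (-β * r ^ (-β - 1)) - b * (-β * r₀ ^ (-β - 1))| :=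
          abs_add_le _ _
      _ ≤ |a * Real.cos θ - a * Real.cos θ₀|
            + |ξlast * (φ' (c * r) * c) - ξlast * (φ' (c * r₀) * c)|
            + |b * (-β * r ^ (-β - 1)) - b * (-β * r₀ ^ (-β - 1))| := by
          gcongr
          exact abs_add_le _ _
      _ ≤ lam * (ε / 8) + lam * (ε / 8) + lam * (ε / 6) := add_le_add (add_le_add T1 T2) T3
  have habs : |deriv (fun r' => g r' θ₀) r₀| - |deriv (fun r' => g r' θ) r|
      ≤ |deriv (fun r' => g r' θ) r - deriv (fun r' => g r' θ₀) r₀| := by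
    rw [abs_sub_comm]
    exact abs_sub_abs_le_abs_sub _ _
  have hεlam : 0 ≤ ε * lam := le_of_lt (mul_pos hε0 hlam0)
  nlinarith [h₀, hdiff, habs]
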